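/- With γ_m and p_m as above (γ the anisotropic polynomials, p the Chebyshev polynomials of the first kind), for every m_B ≥ L: γ_{m_B}(z) p_{m_B+1}(z) - γ_{m_B+1}(z) p_{m_B}(z) = ϖ z g(z, φ_z), where g(z, φ_z) = 1 + 2 Σ_{m=1}^{L} β_m γ_m(z) p_m(z). -/

import Mathlib

theorem christoffel_darboux_g
    (ϖ : ℝ) (hϖ : ϖ ∈ Set.Ioo (0:ℝ) 1) (L : ℕ)
    (β : ℕ → ℝ) (hβ0 : β 0 = 1) (hβL : ∀ m : ℕ, L < m → β m = 0)
    (h : ℕ → ℝ) (hh : ∀ m, h m = 1 - ϖ * β m)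
    (z : ℂ) (γ p : ℕ → ℂ)
    (hγ0 : γ 0 = 1) (hγ1 : γ 1 = (1 - ϖ : ℂ) * z)
    (hγrec : ∀ m : ℕ, 1 ≤ m → 2 * z * (h m : ℂ) * γ m - γ (m + 1) - γ (m - 1) = 0)
    (hp0 : p 0 = 1) (hp1 : p 1 = z)
    (hprec : ∀ m : ℕ, 1 ≤ m → 2 * z * p m - p (m + 1) - p (m - 1) = 0)
    (g : ℂ)
    (hgdef : g = 1 + 2 * ∑ m ∈ Finset.Icc 1 L, (β m : ℂ) * γ m * p m) :
    ∀ mB : ℕ, L ≤ mB →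
      γ mB * p (mB + 1) - γ (mB + 1) * p mB = (ϖ : ℂ) * z * g := by
  have key : ∀ n : ℕ, γ n * p (n + 1) - γ (n + 1) * p n =
      (ϖ : ℂ) * z * (1 + 2 * ∑ m ∈ Finset.Icc 1 n, (β m : ℂ) * γ m * p m) := by
    intro n
    induction n with
    | zero =>
      simp [hγ0, hγ1, hp0, hp1]
      ring
    | succ n ih =>
      have hγ := hγrec (n + 1) (Nat.le_add_left 1 n)
      have hp := hprec (n + 1) (Nat.le_add_left 1 n)
      simp only [Nat.add_sub_cancel] at hγ hp
      have hγ' : γ (n + 2) = 2 * z * (h (n + 1) : ℂ) * γ (n + 1) - γ n := by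
        linear_combination -hγ
      have hp' : p (n + 2) = 2 * z * p (n + 1) - p n := by
        linear_combination -hp
      rw [Finset.sum_Icc_succ_top (Nat.le_add_left 1 n)]
      have hhc : (h (n + 1) : ℂ) = 1 - (ϖ : ℂ) * (β (n + 1) : ℂ) := by
        rw [hh]; push_cast; ring
      rw [show n + 1 + 1 = n + 2 from rfl, hγ', hp', hhc]
      linear_combination ih
  intro mB hmB
  have hsum : ∑ m ∈ Finset.Icc 1 mB, (β m : ℂ) * γ m * p m
      = ∑ m ∈ Finset.Icc 1 L, (β m : ℂ) * γ m * p m := by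
    symm
    apply Finset.sum_subset
    · exact Finset.Icc_subset_Icc_right hmB
    · intro x hx hx'
      simp only [Finset.mem_Icc] at hx hx'
      have : L < x := by omega
      rw [hβL x this]
      simp
  rw [key mB, hsum, hgdef]
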